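/- arXiv:0707.0218 — 3 statements merged into one kernel-verified Lean document; each statement's English description precedes it below -/
import Mathlib

section
/- Let v : B → ℝ be a function on the unit cube B such that all mixed partial derivatives D^α v with α ∈ Zⁿ = {0,1}ⁿ exist and are continuous on B. If f_α = D^α v for all α ∈ Zⁿ, then K({f_α}_{α ∈ Zⁿ}) = v; that is, the reconstruction operator K applied to the family of mixed partial derivatives of v of order at most one in each variable recovers v. -/
/-- The unit cube `B = {x ∈ ℝⁿ : ‖x‖_∞ ≤ 1}`. -/
def cubeB (n : ℕ) : Set (Fin n → ℝ) := {x | ∀ i, |x i| ≤ 1}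

/-- The operator `g_{i,j}`: for `j = 0`, evaluation at `x_i = 0`; for `j = 1`,
integration `∫₀^{x_i}` in the `i`-th variable. -/
noncomputable def gop (n : ℕ) (i : Fin n) (j : ℕ) (h : (Fin n → ℝ) → ℝ) :
    (Fin n → ℝ) → ℝ :=
  fun x => if j = 0 then h (Function.update x i 0)
    else ∫ s in (0:ℝ)..(x i), h (Function.update x i s)

/-- `G_α = g_{1,α₁} ∘ g_{2,α₂} ∘ ⋯ ∘ g_{n,αₙ}`. -/
noncomputable def Gop (n : ℕ) (α : Fin n → ℕ) (h : (Fin n → ℝ) → ℝ) :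
    (Fin n → ℝ) → ℝ :=
  (List.finRange n).foldr (fun i g => gop n i (α i) g) h

/-- `Zⁿ = {α ∈ ℕⁿ : α_i ∈ {0,1}}`. -/
def Zn (n : ℕ) : Finset (Fin n → ℕ) := Fintype.piFinset fun _ => ({0, 1} : Finset ℕ)

/-- The reconstruction operator `K({f_α}_{α ∈ Zⁿ}) = ∑_{α ∈ Zⁿ} G_α f_α`. -/
noncomputable def Kop (n : ℕ) (F : (Fin n → ℕ) → (Fin n → ℝ) → ℝ) :
    (Fin n → ℝ) → ℝ :=
  fun x => ∑ α ∈ Zn n, Gop n α (F α) x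

section aux
variable {n : ℕ}

lemma mem_Zn_iff {α : Fin n → ℕ} : α ∈ Zn n ↔ ∀ i, α i = 0 ∨ α i = 1 := by
  simp [Zn, Fintype.mem_piFinset]

lemma mem_cube_update {x : Fin n → ℝ} (hx : x ∈ cubeB n) (i : Fin n) {s : ℝ}
    (hs : |s| ≤ 1) : Function.update x i s ∈ cubeB n := by
  intro j
  rcases eq_or_ne j i with rfl | hj
  · simpa using hs
  · simpa [Function.update_of_ne hj] using hx j

lemma abs_le_one_of_uIcc {t s : ℝ} (ht : |t| ≤ 1) (hs : s ∈ Set.uIcc 0 t) : |s| ≤ 1 := by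
  rw [Set.uIcc_eq_union] at hs
  rw [abs_le] at ht ⊢
  rcases hs with hs | hs <;> rw [Set.mem_Icc] at hs <;> constructor <;> linarith [hs.1, hs.2]

lemma gop_continuous (i : Fin n) (j : ℕ) {h : (Fin n → ℝ) → ℝ} (hh : Continuous h) :
    Continuous (gop n i j h) := by
  unfold gop
  by_cases hj : j = 0
  · simp only [hj, if_pos rfl]
    exact hh.comp (continuous_id.update i continuous_const)
  · simp only [if_neg hj]
    exact intervalIntegral.continuous_parametric_intervalIntegral_of_continuous
      (f := fun x s => h (Function.update x i s))
      (hh.comp ((continuous_fst).update i continuous_snd)) (continuous_apply i)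

lemma foldr_continuous (e : Fin n → ℕ) {h : (Fin n → ℝ) → ℝ} (hh : Continuous h) :
    ∀ L : List (Fin n), Continuous (L.foldr (fun i g => gop n i (e i) g) h)
  | [] => hh
  | i :: L => gop_continuous i (e i) (foldr_continuous e hh L)

lemma foldr_congr (e : Fin n → ℕ) {h₁ h₂ : (Fin n → ℝ) → ℝ}
    (hh : ∀ y ∈ cubeB n, h₁ y = h₂ y) :
    ∀ L : List (Fin n), ∀ x ∈ cubeB n,
      (L.foldr (fun i g => gop n i (e i) g) h₁) x =
      (L.foldr (fun i g => gop n i (e i) g) h₂) x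
  | [], x, hx => hh x hx
  | i :: L, x, hx => by
    simp only [List.foldr_cons, gop]
    by_cases hj : e i = 0
    · simp only [hj, if_pos rfl]
      exact foldr_congr e hh L _ (mem_cube_update hx i (by norm_num))
    · simp only [if_neg hj]
      refine intervalIntegral.integral_congr fun s hs => ?_
      exact foldr_congr e hh L _ (mem_cube_update hx i (abs_le_one_of_uIcc (hx i) hs))

def indNat (T : Finset (Fin n)) : Fin n → ℕ := fun i => if i ∈ T then 1 else 0

lemma add_indNat_mem_Zn {α : Fin n → ℕ} (hα : α ∈ Zn n) {T : Finset (Fin n)}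
    (h : ∀ j ∈ T, α j = 0) : α + indNat T ∈ Zn n := by
  rw [mem_Zn_iff] at hα ⊢
  intro j
  by_cases hj : j ∈ T
  · right; simp [indNat, hj, h j hj]
  · simpa [indNat, hj] using hα j

lemma key_lemma (n : ℕ) (G : (Fin n → ℕ) → (Fin n → ℝ) → ℝ)
    (hGc : ∀ α ∈ Zn n, Continuous (G α))
    (hGftc : ∀ α ∈ Zn n, ∀ i : Fin n, α i = 0 → ∀ x ∈ cubeB n,
      G α x = G α (Function.update x i 0) +
        ∫ s in (0:ℝ)..(x i), G (α + Pi.single i 1) (Function.update x i s)) :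
    ∀ L : List (Fin n), L.Nodup → ∀ α ∈ Zn n, (∀ i ∈ L, α i = 0) →
    ∀ x ∈ cubeB n,
      ∑ T ∈ L.toFinset.powerset,
        (L.foldr (fun i g => gop n i ((α + indNat T) i) g) (G (α + indNat T))) x
        = G α x := by
  intro L
  induction L with
  | nil =>
    intro _ α hα _ x hx
    have : α + indNat (∅ : Finset (Fin n)) = α := by
      funext j; simp [indNat]
    simp [this]
  | cons i L ih =>
    intro hnd α hα hsup x hx
    rw [List.nodup_cons] at hnd
    obtain ⟨hiL, hLnd⟩ := hnd
    have hiLf : i ∉ L.toFinset := by simpa using hiL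
    have hαi : α i = 0 := hsup i (List.mem_cons_self)
    have hsup' : ∀ j ∈ L, α j = 0 := fun j hj => hsup j (List.mem_cons_of_mem i hj)
    have hα' : α + Pi.single i 1 ∈ Zn n := by
      rw [mem_Zn_iff] at hα ⊢
      intro j
      rcases eq_or_ne j i with rfl | hj
      · right; simp [hαi]
      · simpa [Pi.single_apply, hj] using hα j
    rw [List.toFinset_cons, Finset.sum_powerset_insert hiLf]
    have h1 : ∑ T ∈ L.toFinset.powerset,
        ((i :: L).foldr (fun j g => gop n j ((α + indNat T) j) g) (G (α + indNat T))) x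
        = G α (Function.update x i 0) := by
      rw [← ih hLnd α hα hsup' (Function.update x i 0)
        (mem_cube_update hx i (by norm_num))]
      refine Finset.sum_congr rfl fun T hT => ?_
      have hiT : i ∉ T := fun h => hiLf (Finset.mem_powerset.1 hT h)
      have hTi : (α + indNat T) i = 0 := by simp [indNat, hiT, hαi]
      simp only [List.foldr_cons, gop, hTi, if_pos]
    set β : Fin n → ℕ := α + Pi.single i 1 with hβ
    have h2 : ∑ T ∈ L.toFinset.powerset,
        ((i :: L).foldr (fun j g => gop n j ((α + indNat (insert i T)) j) g)
          (G (α + indNat (insert i T)))) x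
        = ∫ s in (0:ℝ)..(x i), G β (Function.update x i s) := by
      have hrw : ∀ T ∈ L.toFinset.powerset,
          α + indNat (insert i T) = β + indNat T := by
        intro T hT
        have hiT : i ∉ T := fun h => hiLf (Finset.mem_powerset.1 hT h)
        funext j
        rcases eq_or_ne j i with rfl | hj
        · simp [indNat, hiT, hβ]
        · simp [indNat, Pi.single_apply, hj, hβ]
      have hsub : ∀ T ∈ L.toFinset.powerset, ∀ j ∈ T, β j = 0 := by
        intro T hT j hj
        have hjL : j ∈ L := by
          have := Finset.mem_powerset.1 hT hj; simpa using this
        have hji : j ≠ i := fun h => hiL (h ▸ hjL)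
        simp [hsup' j hjL, Pi.single_apply, hji, hβ]
      calc ∑ T ∈ L.toFinset.powerset,
            ((i :: L).foldr (fun j g => gop n j ((α + indNat (insert i T)) j) g)
              (G (α + indNat (insert i T)))) x
          = ∑ T ∈ L.toFinset.powerset, ∫ s in (0:ℝ)..(x i),
              (L.foldr (fun j g => gop n j ((β + indNat T) j) g)
                (G (β + indNat T))) (Function.update x i s) := by
            refine Finset.sum_congr rfl fun T hT => ?_
            rw [hrw T hT]
            have hTi : (β + indNat T) i = 1 := by
              have hiT : i ∉ T := fun h => hiLf (Finset.mem_powerset.1 hT h)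
              simp [indNat, hiT, hαi, hβ]
            simp only [List.foldr_cons, gop, hTi]
            norm_num
        _ = ∫ s in (0:ℝ)..(x i), ∑ T ∈ L.toFinset.powerset,
              (L.foldr (fun j g => gop n j ((β + indNat T) j) g)
                (G (β + indNat T))) (Function.update x i s) := by
            rw [intervalIntegral.integral_finset_sum]
            intro T hT
            exact ((foldr_continuous _ (hGc _ (add_indNat_mem_Zn hα' (hsub T hT))) L).comp
              (continuous_const.update i continuous_id)).intervalIntegrable _ _
        _ = ∫ s in (0:ℝ)..(x i), G β (Function.update x i s) := by
            refine intervalIntegral.integral_congr fun s hs => ?_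
            exact ih hLnd β hα' (fun j hj => by
              have hji : j ≠ i := fun h => hiL (h ▸ hj)
              simp [hsup' j hj, Pi.single_apply, hji, hβ])
              (Function.update x i s) (mem_cube_update hx i (abs_le_one_of_uIcc (hx i) hs))
    rw [h1, h2, hβ]
    exact (hGftc α hα i hαi x hx).symm

end aux

section main
variable {n : ℕ}

noncomputable def projCube (x : Fin n → ℝ) : Fin n → ℝ := fun i => max (-1) (min (x i) 1)

lemma projCube_continuous : Continuous (projCube (n := n)) :=
  continuous_pi fun i => continuous_const.max ((continuous_apply i).min continuous_const)

lemma projCube_mem (x : Fin n → ℝ) : projCube x ∈ cubeB n := by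
  intro i
  rw [abs_le]
  constructor
  · exact le_max_left _ _
  · exact max_le (by norm_num) (min_le_right _ _)

lemma projCube_eq {x : Fin n → ℝ} (hx : x ∈ cubeB n) : projCube x = x := by
  funext i
  have := abs_le.1 (hx i)
  rw [projCube, min_eq_left this.2, max_eq_right this.1]

end main


/-- if `v : B → ℝ` is such that all mixed partial derivatives `D^α v`
with `α ∈ Zⁿ = {0,1}ⁿ` exist and are continuous on `B`, then applying the
reconstruction operator `K` to the family `{D^α v}_{α ∈ Zⁿ}` recovers `v`.
The family of mixed partial derivatives is encoded by `F : α ↦ D^α v`: `F 0 = v`,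
and for `α ∈ Zⁿ` with `α i = 0`, the function `F (α + eᵢ)` is the partial derivative
of `F α` in the `i`-th variable at every point of `B`. -/
theorem Kop_recovers (n : ℕ) (v : (Fin n → ℝ) → ℝ)
    (F : (Fin n → ℕ) → (Fin n → ℝ) → ℝ) (hF0 : F 0 = v)
    (hder : ∀ α ∈ Zn n, ∀ i : Fin n, α i = 0 → ∀ x ∈ cubeB n,
      HasDerivAt (fun t : ℝ => F α (Function.update x i t))
        (F (α + Pi.single i 1) x) (x i))
    (hcont : ∀ α ∈ Zn n, ContinuousOn (F α) (cubeB n)) :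
    ∀ x ∈ cubeB n, Kop n F x = v x := by
  classical
  intro x hx
  set F' : (Fin n → ℕ) → (Fin n → ℝ) → ℝ := fun α y => F α (projCube y) with hF'
  have hF'cube : ∀ α : Fin n → ℕ, ∀ y ∈ cubeB n, F α y = F' α y := by
    intro α y hy
    rw [hF']
    simp [projCube_eq hy]
  have hGc : ∀ α ∈ Zn n, Continuous (F' α) := fun α hα =>
    (hcont α hα).comp_continuous projCube_continuous projCube_mem
  have hGftc : ∀ α ∈ Zn n, ∀ i : Fin n, α i = 0 → ∀ y ∈ cubeB n,
      F' α y = F' α (Function.update y i 0) +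
        ∫ s in (0:ℝ)..(y i), F' (α + Pi.single i 1) (Function.update y i s) := by
    intro α hα i hαi y hy
    have hα' : α + Pi.single i 1 ∈ Zn n := by
      rw [mem_Zn_iff] at hα ⊢
      intro j
      rcases eq_or_ne j i with rfl | hj
      · right; simp [hαi]
      · simpa [Pi.single_apply, hj] using hα j
    have hd : ∀ t ∈ Set.uIcc 0 (y i),
        HasDerivAt (fun s => F α (Function.update y i s))
          (F (α + Pi.single i 1) (Function.update y i t)) t := by
      intro t ht
      have hyt := mem_cube_update hy i (abs_le_one_of_uIcc (hy i) ht)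
      have H := hder α hα i hαi (Function.update y i t) hyt
      simp only [Function.update_idem] at H
      rwa [Function.update_self] at H
    have hint : IntervalIntegrable (fun s => F (α + Pi.single i 1) (Function.update y i s))
        MeasureTheory.volume 0 (y i) := by
      apply ContinuousOn.intervalIntegrable
      apply (hcont _ hα').comp (continuous_const.update i continuous_id).continuousOn
      intro s hs
      exact mem_cube_update hy i (abs_le_one_of_uIcc (hy i) hs)
    have hFTC := intervalIntegral.integral_eq_sub_of_hasDerivAt hd hint
    simp only [Function.update_eq_self] at hFTC
    have h0 : Function.update y i 0 ∈ cubeB n := mem_cube_update hy i (by norm_num)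
    have hic : (∫ s in (0:ℝ)..(y i), F' (α + Pi.single i 1) (Function.update y i s))
        = ∫ s in (0:ℝ)..(y i), F (α + Pi.single i 1) (Function.update y i s) :=
      intervalIntegral.integral_congr fun s hs =>
        (hF'cube _ _ (mem_cube_update hy i (abs_le_one_of_uIcc (hy i) hs))).symm
    rw [← hF'cube α y hy, ← hF'cube α _ h0, hic, hFTC]
    ring
  have hkey := key_lemma n F' hGc hGftc (List.finRange n) (List.nodup_finRange n) 0
    (by rw [mem_Zn_iff]; intro i; left; rfl) (fun i _ => rfl) x hx
  simp only [List.toFinset_finRange, zero_add] at hkey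
  have hsum : Kop n F x = ∑ T ∈ (Finset.univ : Finset (Fin n)).powerset,
      ((List.finRange n).foldr (fun i g => gop n i (indNat T i) g) (F' (indNat T))) x := by
    rw [show Kop n F x = ∑ α ∈ Zn n, Gop n α (F' α) x from
      Finset.sum_congr rfl fun α hα =>
        foldr_congr α (fun y hy => hF'cube α y hy) (List.finRange n) x hx]
    refine Finset.sum_nbij' (i := fun γ => Finset.univ.filter fun j => γ j = 1)
      (j := fun T => indNat T) ?_ ?_ ?_ ?_ ?_
    · intro γ _; exact Finset.mem_powerset.2 (Finset.filter_subset _ _)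
    · intro T _
      rw [mem_Zn_iff]
      intro j
      by_cases hj : j ∈ T <;> simp [indNat, hj]
    · intro γ hγ
      funext j
      rcases (mem_Zn_iff.1 hγ) j with h | h <;> simp [indNat, h]
    · intro T _
      ext j
      simp [indNat]
    · intro γ hγ
      have hind : indNat (Finset.univ.filter fun j => γ j = 1) = γ := by
        funext j
        rcases (mem_Zn_iff.1 hγ) j with h | h <;> simp [indNat, h]
      simp only [hind]
      rfl
  rw [hsum, hkey]
  show F 0 (projCube x) = v x
  rw [projCube_eq hx, hF0]
end

section
/- Suppose v : B → ℝ is twice continuously differentiable on the unit cube B (all partial derivatives of total order up to 2 exist and are continuous on B). Then for any ε > 0, there exists a polynomial p in n variables such that |p(x) − v(x)| ≤ ε · xᵀx for all x ∈ B. -/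
/-- The squared Euclidean norm `xᵀx = ∑ₖ x_k²`. -/
def sqnorm (n : ℕ) (x : Fin n → ℝ) : ℝ := ∑ k, x k ^ 2

open Filter Asymptotics Topology Metric

section Aux

lemma ball_subset_cubeB (n : ℕ) : Metric.ball (0 : Fin n → ℝ) 1 ⊆ cubeB n := by
  intro x hx i
  rw [Metric.mem_ball, dist_zero_right] at hx
  calc |x i| = ‖x i‖ := rfl
    _ ≤ ‖x‖ := norm_le_pi_norm x i
    _ ≤ 1 := hx.le

lemma isCompact_cubeB (n : ℕ) : IsCompact (cubeB n) := by
  have : cubeB n = Set.pi Set.univ (fun _ : Fin n => Set.Icc (-1 : ℝ) 1) := by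
    ext x; simp [cubeB, Set.mem_pi, abs_le, forall_and, Pi.le_def]
  rw [this]
  exact isCompact_univ_pi fun _ => isCompact_Icc

lemma sqnorm_nonneg' (n : ℕ) (x : Fin n → ℝ) : 0 ≤ sqnorm n x :=
  Finset.sum_nonneg fun _ _ => sq_nonneg _

lemma norm_sq_le_sqnorm (n : ℕ) (x : Fin n → ℝ) : ‖x‖ ^ 2 ≤ sqnorm n x := by
  have h : ‖x‖ ≤ Real.sqrt (sqnorm n x) := by
    apply pi_norm_le_iff_of_nonneg (Real.sqrt_nonneg _) |>.2
    intro i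
    have : (x i) ^ 2 ≤ sqnorm n x := Finset.single_le_sum (f := fun k => x k ^ 2)
      (fun _ _ => sq_nonneg _) (Finset.mem_univ i)
    calc ‖x i‖ = Real.sqrt ((x i) ^ 2) := by rw [Real.sqrt_sq_eq_abs]; rfl
      _ ≤ Real.sqrt (sqnorm n x) := Real.sqrt_le_sqrt this
  calc ‖x‖ ^ 2 ≤ Real.sqrt (sqnorm n x) ^ 2 := pow_le_pow_left₀ (norm_nonneg x) h 2
    _ = sqnorm n x := Real.sq_sqrt (sqnorm_nonneg' n x)

lemma sqnorm_pos' (n : ℕ) {x : Fin n → ℝ} (hx : x ≠ 0) : 0 < sqnorm n x := by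
  rcases Function.ne_iff.1 hx with ⟨i, hi⟩
  have hi2 : x i ≠ 0 := hi
  have : (0:ℝ) < x i ^ 2 := by positivity
  exact this.trans_le (Finset.single_le_sum (f := fun k => x k ^ 2)
     (fun _ _ => sq_nonneg _) (Finset.mem_univ i))

lemma continuous_sqnorm (n : ℕ) : Continuous (sqnorm n) :=
  continuous_finset_sum _ fun k _ => (continuous_apply k).pow 2

noncomputable def evalHom (n : ℕ) : MvPolynomial (Fin n) ℝ →ₐ[ℝ] C(cubeB n, ℝ) :=
  MvPolynomial.aeval fun i =>
    ⟨fun x => (x : Fin n → ℝ) i, (continuous_apply i).comp continuous_subtype_val⟩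

lemma evalHom_apply (n : ℕ) (p : MvPolynomial (Fin n) ℝ) (x : cubeB n) :
    evalHom n p x = MvPolynomial.eval (x : Fin n → ℝ) p := by
  induction p using MvPolynomial.induction_on with
  | C a => simp [evalHom]
  | add p q hp hq => simp [map_add, hp, hq]
  | mul_X p i hp =>
    rw [map_mul, ContinuousMap.mul_apply, hp, map_mul]
    simp [evalHom]

lemma evalHom_range_separates (n : ℕ) :
    ((evalHom n).range : Subalgebra ℝ C(cubeB n, ℝ)).SeparatesPoints := by
  intro x y hxy
  have h : (x : Fin n → ℝ) ≠ (y : Fin n → ℝ) := fun h => hxy (Subtype.ext h)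
  rcases Function.ne_iff.1 h with ⟨i, hi⟩
  refine ⟨_, ⟨evalHom n (MvPolynomial.X i), ⟨MvPolynomial.X i, rfl⟩, rfl⟩, ?_⟩
  simpa [evalHom_apply] using hi

lemma taylor_isLittleO_aux (n : ℕ) (v : (Fin n → ℝ) → ℝ) (hv : ContDiffOn ℝ 2 v (cubeB n)) :
    (fun x => v x - v 0 - fderiv ℝ v 0 x - (1/2) * (fderiv ℝ (fderiv ℝ v) 0 x x))
      =o[𝓝 0] (fun x => ‖x‖^2) := by
  have hball := ball_subset_cubeB n
  have hCA : ∀ y ∈ ball (0 : Fin n → ℝ) 1, ContDiffAt ℝ 2 v y := fun y hy =>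
    hv.contDiffAt (Filter.mem_of_superset (isOpen_ball.mem_nhds hy) hball)
  have hdv : ∀ y ∈ ball (0 : Fin n → ℝ) 1, HasFDerivAt v (fderiv ℝ v y) y := fun y hy =>
    ((hCA y hy).differentiableAt two_ne_zero).hasFDerivAt
  set L := fderiv ℝ v 0 with hLdef
  set D := fderiv ℝ (fderiv ℝ v) 0 with hDdef
  have h0 : (0 : Fin n → ℝ) ∈ ball (0 : Fin n → ℝ) 1 := mem_ball_self one_pos
  have hD' : HasFDerivAt (fderiv ℝ v) D 0 :=
    (((hCA 0 h0).fderiv_right (le_refl 2)).differentiableAt one_ne_zero).hasFDerivAt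
  have hev : ∀ᶠ y in 𝓝 (0 : Fin n → ℝ), HasFDerivAt v (fderiv ℝ v y) y := by
    filter_upwards [isOpen_ball.mem_nhds h0] with y hy using hdv y hy
  have hsymm : ∀ a b, D a b = D b a := fun a b =>
    second_derivative_symmetric_of_eventually hev hD' a b
  rw [isLittleO_iff]
  intro c hc
  have hlo : (fun y => fderiv ℝ v y - L - D y) =o[𝓝 0] fun y => ‖y‖ := by
    have := hD'.isLittleO.norm_right
    simpa using this
  have hev2 : ∀ᶠ y in 𝓝 (0 : Fin n → ℝ), ‖fderiv ℝ v y - L - D y‖ ≤ c * ‖y‖ := by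
    have := isLittleO_iff.1 hlo hc
    simpa using this
  obtain ⟨δ, hδpos, hδ⟩ := Metric.eventually_nhds_iff.1 hev2
  refine Metric.eventually_nhds_iff.2 ⟨min δ 1, lt_min hδpos one_pos, ?_⟩
  intro x hx
  rw [dist_zero_right] at hx
  set φ : (Fin n → ℝ) → ℝ := fun y => v y - L y - (1/2) * (D y y) with hφdef
  have hnorm : ∀ y ∈ closedBall (0 : Fin n → ℝ) ‖x‖, ‖y‖ < min δ 1 := by
    intro y hy
    rw [mem_closedBall, dist_zero_right] at hy
    exact lt_of_le_of_lt hy hx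
  have key : ∀ y ∈ closedBall (0 : Fin n → ℝ) ‖x‖,
      HasFDerivWithinAt φ (fderiv ℝ v y - L - D y) (closedBall 0 ‖x‖) y := by
    intro y hy
    have hy1 : y ∈ ball (0 : Fin n → ℝ) 1 := by
      rw [mem_ball, dist_zero_right]
      exact (hnorm y hy).trans_le (min_le_right _ _)
    have h1 : HasFDerivAt v (fderiv ℝ v y) y := hdv y hy1
    have h2 : HasFDerivAt (fun z => D z z)
        ((D y).comp (ContinuousLinearMap.id ℝ _) + D.flip y) y :=
      D.hasFDerivAt.clm_apply (hasFDerivAt_id y)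
    have h2' : (D y).comp (ContinuousLinearMap.id ℝ _) + D.flip y = (2:ℝ) • D y := by
      ext h
      simp [hsymm h y]
      ring
    have h3 : HasFDerivAt (fun z => (1/2 : ℝ) * D z z) (D y) y := by
      have := h2.const_mul (1/2 : ℝ)
      rw [h2', smul_smul] at this
      norm_num at this
      exact this
    exact ((h1.sub L.hasFDerivAt).sub h3).hasFDerivWithinAt
  have hb : ∀ y ∈ closedBall (0 : Fin n → ℝ) ‖x‖, ‖fderiv ℝ v y - L - D y‖ ≤ c * ‖x‖ := by
    intro y hy
    have h1 := hδ (by rw [dist_zero_right]; exact (hnorm y hy).trans_le (min_le_left _ _))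
    refine h1.trans (mul_le_mul_of_nonneg_left ?_ hc.le)
    rw [mem_closedBall, dist_zero_right] at hy
    exact hy
  have hx_mem : x ∈ closedBall (0 : Fin n → ℝ) ‖x‖ := by
    rw [mem_closedBall, dist_zero_right]
  have hmvt : ‖φ x - φ 0‖ ≤ c * ‖x‖ * ‖x - 0‖ :=
    (convex_closedBall (0 : Fin n → ℝ) ‖x‖).norm_image_sub_le_of_norm_hasFDerivWithin_le
      key hb (mem_closedBall_self (norm_nonneg x)) hx_mem
  have hφ0 : φ 0 = v 0 := by simp [hφdef]
  have heq : v x - v 0 - L x - (1/2) * (D x x) = φ x - φ 0 := by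
    rw [hφ0]; simp [hφdef]; ring
  rw [heq]
  calc ‖φ x - φ 0‖ ≤ c * ‖x‖ * ‖x - 0‖ := hmvt
    _ = c * ‖x‖ ^ 2 := by rw [sub_zero]; ring
    _ ≤ c * ‖‖x‖ ^ 2‖ := by rw [Real.norm_eq_abs, abs_of_nonneg (by positivity)]

end Aux

/-- if `v : B → ℝ` is twice continuously differentiable on the unit
cube `B`, then for any `ε > 0` there exists a polynomial `p` in `n` variables with
`|p(x) − v(x)| ≤ ε · xᵀx` for all `x ∈ B`. -/
theorem poly_approx_weighted (n : ℕ) (v : (Fin n → ℝ) → ℝ)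
    (hv : ContDiffOn ℝ 2 v (cubeB n)) (ε : ℝ) (hε : 0 < ε) :
    ∃ p : MvPolynomial (Fin n) ℝ, ∀ x ∈ cubeB n,
      |MvPolynomial.eval x p - v x| ≤ ε * sqnorm n x := by
  classical
  set L := fderiv ℝ v 0 with hLdef
  set D := fderiv ℝ (fderiv ℝ v) 0 with hDdef
  set r : (Fin n → ℝ) → ℝ := fun x => v x - v 0 - L x - (1/2) * (D x x) with hrdef
  have hr : r =o[𝓝 0] fun x => ‖x‖^2 := taylor_isLittleO_aux n v hv
  set F : (Fin n → ℝ) → ℝ := fun x => if x = 0 then 0 else r x / sqnorm n x with hFdef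
  -- F tends to 0 at 0
  have hF0 : Filter.Tendsto F (𝓝 0) (𝓝 0) := by
    rw [NormedAddCommGroup.tendsto_nhds_zero]
    intro ε' hε'
    filter_upwards [isLittleO_iff.1 hr (half_pos hε')] with x hx
    by_cases hx0 : x = 0
    · simp only [hFdef, hx0, if_pos rfl]
      simpa using hε'
    · have hn0 : (0:ℝ) < ‖x‖ ^ 2 := by
        have := norm_pos_iff.2 hx0
        positivity
      have hsq : ‖x‖ ^ 2 ≤ sqnorm n x := norm_sq_le_sqnorm n x
      have hspos : 0 < sqnorm n x := lt_of_lt_of_le hn0 hsq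
      have hFx : F x = r x / sqnorm n x := if_neg hx0
      simp only [Real.norm_eq_abs] at hx ⊢
      rw [hFx, abs_div, abs_of_pos hspos]
      rw [abs_of_nonneg (by positivity : (0:ℝ) ≤ ‖x‖ ^ 2)] at hx
      have h1 : |r x| / sqnorm n x ≤ |r x| / ‖x‖ ^ 2 :=
        div_le_div_of_nonneg_left (abs_nonneg _) hn0 hsq
      have h2 : |r x| / ‖x‖ ^ 2 ≤ ε' / 2 := by
        rw [div_le_iff₀ hn0]
        calc |r x| ≤ ε' / 2 * ‖x‖ ^ 2 := hx
          _ = ε' / 2 * ‖x‖ ^ 2 := rfl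
      calc |r x| / sqnorm n x ≤ |r x| / ‖x‖ ^ 2 := h1
        _ ≤ ε' / 2 := h2
        _ < ε' := half_lt_self hε'
  -- continuity of r on the cube
  have hr_cont : ContinuousOn r (cubeB n) := by
    have hq : Continuous fun x : Fin n → ℝ => D x x :=
      D.continuous.clm_apply continuous_id
    exact ((hv.continuousOn.sub continuousOn_const).sub L.continuous.continuousOn).sub
      ((continuous_const.mul hq).continuousOn)
  -- continuity of F on the cube
  have hF_cont : ContinuousOn F (cubeB n) := by
    intro x hx
    by_cases hx0 : x = 0
    · subst hx0
      have : F 0 = 0 := if_pos rfl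
      unfold ContinuousWithinAt
      rw [this]
      exact hF0.mono_left nhdsWithin_le_nhds
    · have hne : ∀ᶠ y in 𝓝[cubeB n] x, F y = r y / sqnorm n y := by
        filter_upwards [eventually_nhdsWithin_of_eventually_nhds (eventually_ne_nhds hx0)]
          with y hy using if_neg hy
      have hbase : ContinuousWithinAt (fun y => r y / sqnorm n y) (cubeB n) x :=
        (hr_cont x hx).div ((continuous_sqnorm n).continuousWithinAt)
          (ne_of_gt (sqnorm_pos' n hx0))
      exact hbase.congr_of_eventuallyEq hne (if_neg hx0)
  -- Stone–Weierstrass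
  have hcs : CompactSpace (cubeB n) := isCompact_iff_compactSpace.mp (isCompact_cubeB n)
  obtain ⟨g, hg⟩ := ContinuousMap.exists_mem_subalgebra_near_continuous_of_separatesPoints
    (evalHom n).range (evalHom_range_separates n) (fun x : cubeB n => F x)
    (continuousOn_iff_continuous_restrict.mp hF_cont) ε hε
  obtain ⟨q, hq⟩ := g.2
  -- the Taylor polynomial
  set e : Fin n → (Fin n → ℝ) := fun i => fun j => if i = j then 1 else 0 with hedef
  set PT2 : MvPolynomial (Fin n) ℝ :=
    MvPolynomial.C (v 0) + ∑ i, MvPolynomial.C (L (e i)) * MvPolynomial.X i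
      + MvPolynomial.C (1/2 : ℝ) *
        ∑ i, ∑ j, MvPolynomial.C (D (e i) (e j)) * MvPolynomial.X i * MvPolynomial.X j
    with hPT2def
  have hPT2 : ∀ x, MvPolynomial.eval x PT2 = v 0 + L x + (1/2) * (D x x) := by
    intro x
    have h1 : L x = ∑ i, L (e i) * x i := by
      have := L.toLinearMap.pi_apply_eq_sum_univ x
      simpa [hedef, smul_eq_mul, mul_comm] using this
    have hDx : ∀ w : Fin n → ℝ, D x w = ∑ i, x i * (D (e i) w) := by
      intro w
      have := D.toLinearMap.pi_apply_eq_sum_univ x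
      have h2 : D x = ∑ i, x i • D (e i) := by simpa [hedef] using this
      rw [h2]
      simp [ContinuousLinearMap.sum_apply, ContinuousLinearMap.smul_apply, smul_eq_mul]
    have h2 : D x x = ∑ i, ∑ j, D (e i) (e j) * x i * x j := by
      rw [hDx x]
      refine Finset.sum_congr rfl fun i _ => ?_
      have h3 : D (e i) x = ∑ j, (D (e i) (e j)) * x j := by
        have := (D (e i)).toLinearMap.pi_apply_eq_sum_univ x
        simpa [hedef, smul_eq_mul, mul_comm] using this
      rw [h3, Finset.mul_sum]
      refine Finset.sum_congr rfl fun j _ => by ring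
    have hev : MvPolynomial.eval x PT2
        = v 0 + (∑ i, L (e i) * x i) + (1/2) * ∑ i, ∑ j, D (e i) (e j) * x i * x j := by
      simp [hPT2def, mul_assoc]
    rw [hev, ← h1, ← h2]
  set Psq : MvPolynomial (Fin n) ℝ := ∑ k, MvPolynomial.X k ^ 2 with hPsqdef
  have hPsq : ∀ x, MvPolynomial.eval x Psq = sqnorm n x := by
    intro x; simp [hPsqdef, sqnorm]
  refine ⟨PT2 + Psq * q, ?_⟩
  intro x hx
  have hqx : |MvPolynomial.eval x q - F x| < ε := by
    have := hg ⟨x, hx⟩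
    rw [← hq] at this
    simpa [evalHom_apply, Real.norm_eq_abs] using this
  have hrF : r x = F x * sqnorm n x := by
    by_cases hx0 : x = 0
    · subst hx0
      simp [hFdef, hrdef]
    · rw [hFdef]
      simp only [if_neg hx0]
      rw [div_mul_cancel₀ _ (ne_of_gt (sqnorm_pos' n hx0))]
  have heval : MvPolynomial.eval x (PT2 + Psq * q) - v x
      = sqnorm n x * (MvPolynomial.eval x q - F x) := by
    rw [map_add, map_mul, hPT2 x, hPsq x]
    have : v x = v 0 + L x + (1/2) * (D x x) + r x := by rw [hrdef]; ring
    rw [this, hrF]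
    ring
  rw [heval, abs_mul, abs_of_nonneg (sqnorm_nonneg' n x)]
  calc sqnorm n x * |MvPolynomial.eval x q - F x| ≤ sqnorm n x * ε :=
        mul_le_mul_of_nonneg_left hqx.le (sqnorm_nonneg' n x)
    _ = ε * sqnorm n x := mul_comm _ _
end

section
/- Consider the ordinary differential equation ẋ(t) = f(x(t)) where f : ℝⁿ → ℝⁿ is a polynomial vector field. Suppose there exist a polynomial v : ℝⁿ → ℝ, a constant ε > 0, a radius r > 0, and sum-of-squares polynomials s₁, s₂, t₁, t₂ : ℝⁿ → ℝ such that v(x) − s₁(x)(r − xᵀx) − s₂(x) − ε xᵀx = 0 and −∇v(x)ᵀ f(x) − t₁(x)(r − xᵀx) − t₂(x) − ε xᵀx = 0 identically. Then there exist constants μ, δ > 0 such that every solution x(·) with initial condition x₀ in Y(v,r), the largest sublevel set of v contained in the ball {x : xᵀx ≤ r}, satisfies ‖x(t)‖₂ ≤ μ‖x₀‖₂ e^{−δt} for all t ≥ 0. -/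
/-- The Euclidean norm `‖x‖₂ = √(xᵀx)`. -/
noncomputable def enorm2 (n : ℕ) (x : Fin n → ℝ) : ℝ := Real.sqrt (sqnorm n x)

/-- A polynomial is a sum of squares if it is `∑ᵢ gᵢ²` for some polynomials `gᵢ`. -/
def IsSOS {n : ℕ} (p : MvPolynomial (Fin n) ℝ) : Prop :=
  ∃ (K : ℕ) (g : Fin K → MvPolynomial (Fin n) ℝ), p = ∑ i, (g i) ^ 2

/-- The polynomial `xᵀx = ∑ᵢ Xᵢ²`. -/
noncomputable def qpoly (n : ℕ) : MvPolynomial (Fin n) ℝ :=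
  ∑ i, (MvPolynomial.X i) ^ 2

/-- `Y(v,r)`: the largest sublevel set of `v` contained in the ball
`{x : xᵀx ≤ r}`, i.e. the union of all sublevel sets of `v` contained in it. -/
def YSet (n : ℕ) (v : MvPolynomial (Fin n) ℝ) (r : ℝ) : Set (Fin n → ℝ) :=
  {x | ∃ c : ℝ, (∀ y : Fin n → ℝ, MvPolynomial.eval y v ≤ c → sqnorm n y ≤ r) ∧
    MvPolynomial.eval x v ≤ c}

open MvPolynomial Set

namespace SOSAux

variable {n : ℕ}

lemma cont_eval (p : MvPolynomial (Fin n) ℝ) : Continuous fun x : Fin n → ℝ => eval x p := by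
  induction p using MvPolynomial.induction_on with
  | C a => simpa using continuous_const
  | add p q hp hq => simp only [map_add]; exact hp.add hq
  | mul_X p i hp => simp only [map_mul, eval_X]; exact hp.mul (continuous_apply i)

lemma hasDerivAt_eval (p : MvPolynomial (Fin n) ℝ) (x : ℝ → Fin n → ℝ) (x' : Fin n → ℝ) (t : ℝ)
    (hx : HasDerivAt x x' t) :
    HasDerivAt (fun s => eval (x s) p) (∑ i, eval (x t) (pderiv i p) * x' i) t := by
  induction p using MvPolynomial.induction_on with
  | C a =>
    have : (fun s => eval (x s) (C a : MvPolynomial (Fin n) ℝ)) = fun _ => a := by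
      funext s; simp
    rw [this]
    simpa [pderiv_C] using hasDerivAt_const t a
  | add p q hp hq =>
    have : (fun s => eval (x s) (p + q)) = fun s => eval (x s) p + eval (x s) q := by
      funext s; simp
    rw [this]
    have := hp.add hq
    refine HasDerivAt.congr_deriv this ?_; symm
    simp [Finset.sum_add_distrib, add_mul]
  | mul_X p i hp =>
    have hxi : HasDerivAt (fun s => x s i) (x' i) t := by
      have := (ContinuousLinearMap.proj (R := ℝ) (φ := fun _ : Fin n => ℝ) i).hasFDerivAt.comp_hasDerivAt t hx
      exact this
    have : (fun s => eval (x s) (p * X i)) = fun s => eval (x s) p * x s i := by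
      funext s; simp [eval_mul]
    rw [this]
    have hm := hp.mul hxi
    refine HasDerivAt.congr_deriv hm ?_; symm
    classical
    simp only [pderiv_mul, eval_add, eval_mul, add_mul, Finset.sum_add_distrib, pderiv_X,
      eval_X, Pi.single_apply, apply_ite (eval (x t)), Finset.sum_mul]
    congr 1
    · exact Finset.sum_congr rfl fun j _ => by ring
    · rw [Finset.sum_eq_single i (fun j _ hj => by simp [Ne.symm hj]) (by simp)]
      simp

lemma decomp1 (p : MvPolynomial (Fin n) ℝ) :
    ∃ q : Fin n → MvPolynomial (Fin n) ℝ, p = C (eval 0 p) + ∑ i, X i * q i := by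
  induction p using MvPolynomial.induction_on with
  | C a => exact ⟨0, by simp⟩
  | add p r hp hr =>
    obtain ⟨a, ha⟩ := hp; obtain ⟨b, hb⟩ := hr
    refine ⟨a + b, ?_⟩
    rw [map_add, C_add]
    calc p + r = (C (eval 0 p) + ∑ i, X i * a i) + (C (eval 0 r) + ∑ i, X i * b i) := by
          rw [← ha, ← hb]
      _ = C (eval 0 p) + C (eval 0 r) + ∑ i, X i * (a + b) i := by
          simp only [Pi.add_apply, mul_add, Finset.sum_add_distrib]
          ring
  | mul_X p j hp =>
    classical
    obtain ⟨a, ha⟩ := hp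
    refine ⟨fun i => a i * X j + if i = j then C (eval 0 p) else 0, ?_⟩
    have h0 : eval (0 : Fin n → ℝ) (p * X j) = 0 := by simp
    rw [h0, map_zero, zero_add]
    calc p * X j = (C (eval 0 p) + ∑ i, X i * a i) * X j := by rw [← ha]
      _ = (∑ i, X i * (a i * X j)) + C (eval 0 p) * X j := by
          rw [add_mul, Finset.sum_mul]
          ring_nf
      _ = _ := by
          simp only [mul_add, Finset.sum_add_distrib]
          congr 1
          rw [Finset.sum_eq_single j (fun i _ hij => by simp [hij]) (by simp)]
          simp [mul_comm]

lemma eval0_pderiv_of_decomp (a : ℝ) (q : Fin n → MvPolynomial (Fin n) ℝ)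
    (p : MvPolynomial (Fin n) ℝ) (hp : p = C a + ∑ i, X i * q i) (j : Fin n) :
    eval 0 (pderiv j p) = eval 0 (q j) := by
  classical
  subst hp
  rw [map_add, map_sum]
  simp only [pderiv_C, pderiv_mul, pderiv_X]
  rw [map_add, map_sum]
  simp only [map_add, eval_mul, eval_X, Pi.zero_apply, zero_mul, mul_zero, add_zero, eval_zero]
  rw [Finset.sum_eq_single j (fun i _ hij => by simp [Pi.single_apply, hij]) (by simp)]
  simp [Pi.single_apply]

lemma sqnorm_nonneg' (x : Fin n → ℝ) : 0 ≤ sqnorm n x :=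
  Finset.sum_nonneg fun i _ => sq_nonneg _

lemma coord_sq_le (x : Fin n → ℝ) (i : Fin n) : (x i)^2 ≤ sqnorm n x :=
  Finset.single_le_sum (fun j _ => sq_nonneg (x j)) (Finset.mem_univ i)

lemma sqnorm_smul (s : ℝ) (w : Fin n → ℝ) : sqnorm n (s • w) = s^2 * sqnorm n w := by
  simp [sqnorm, Finset.mul_sum, mul_pow]

lemma sqnorm_eq_zero {x : Fin n → ℝ} (h : sqnorm n x = 0) : x = 0 := by
  funext i
  have := (Finset.sum_eq_zero_iff_of_nonneg (fun j _ => sq_nonneg (x j))).1 h i (Finset.mem_univ i)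
  exact pow_eq_zero_iff (by norm_num) |>.1 this

lemma eval_qpoly (x : Fin n → ℝ) : eval x (qpoly n) = sqnorm n x := by
  simp [qpoly, sqnorm]

lemma sos_nonneg {p : MvPolynomial (Fin n) ℝ} (hp : IsSOS p) (x : Fin n → ℝ) :
    0 ≤ eval x p := by
  obtain ⟨K, g, rfl⟩ := hp
  rw [map_sum]
  exact Finset.sum_nonneg fun i _ => by rw [map_pow]; exact sq_nonneg _

lemma smul_line_cont (w : Fin n → ℝ) : Continuous fun s : ℝ => s • w :=
  continuous_id.smul continuous_const

lemma expand1 (p : MvPolynomial (Fin n) ℝ) (w : Fin n → ℝ) :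
    ∃ R : ℝ → ℝ, Continuous R ∧ R 0 = (∑ i, w i * eval 0 (pderiv i p)) ∧
      ∀ s : ℝ, eval (s • w) p = eval 0 p + s * R s := by
  obtain ⟨q, hq⟩ := decomp1 p
  refine ⟨fun s => ∑ i, w i * eval (s • w) (q i), ?_, ?_, ?_⟩
  · exact continuous_finset_sum _ fun i _ =>
      continuous_const.mul ((cont_eval (q i)).comp (smul_line_cont w))
  · simp only [zero_smul]
    exact Finset.sum_congr rfl fun i _ => by
      rw [eval0_pderiv_of_decomp _ _ _ hq i]
  · intro s
    conv_lhs => rw [hq]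
    rw [map_add, map_sum, eval_C, Finset.mul_sum]
    congr 1
    exact Finset.sum_congr rfl fun i _ => by
      rw [eval_mul, eval_X]
      simp [Pi.smul_apply, smul_eq_mul]
      ring

lemma expand2 (p : MvPolynomial (Fin n) ℝ) (w : Fin n → ℝ) :
    ∃ R : ℝ → ℝ, Continuous R ∧
      ∀ s : ℝ, eval (s • w) p
        = eval 0 p + s * (∑ i, w i * eval 0 (pderiv i p)) + s^2 * R s := by
  obtain ⟨q, hq⟩ := decomp1 p
  have key : ∀ i : Fin n, ∃ R : ℝ → ℝ, Continuous R ∧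
      ∀ s : ℝ, eval (s • w) (q i) = eval 0 (q i) + s * R s := by
    intro i
    obtain ⟨R, hRc, _, hR⟩ := expand1 (q i) w
    exact ⟨R, hRc, hR⟩
  choose R hRc hR using key
  refine ⟨fun s => ∑ i, w i * R i s, ?_, ?_⟩
  · exact continuous_finset_sum _ fun i _ => continuous_const.mul (hRc i)
  · intro s
    have base : eval (s • w) p = eval 0 p + ∑ i, (s * w i) * eval (s • w) (q i) := by
      conv_lhs => rw [hq]
      rw [map_add, map_sum, eval_C]
      congr 1
      exact Finset.sum_congr rfl fun i _ => by
        rw [eval_mul, eval_X]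
        simp [Pi.smul_apply, smul_eq_mul]
    rw [base]
    have : ∀ i : Fin n, (s * w i) * eval (s • w) (q i)
        = s * (w i * eval 0 (pderiv i p)) + s^2 * (w i * R i s) := by
      intro i
      rw [hR i s, ← eval0_pderiv_of_decomp _ _ _ hq i]
      ring
    rw [Finset.sum_congr rfl fun i _ => this i, Finset.sum_add_distrib, ← Finset.mul_sum,
      ← Finset.mul_sum]
    ring

lemma cont_sqnorm : Continuous (sqnorm n) :=
  continuous_finset_sum _ fun i _ => (continuous_apply i).pow 2

lemma isCompact_ball (r : ℝ) : IsCompact {x : Fin n → ℝ | sqnorm n x ≤ r} := by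
  apply Metric.isCompact_of_isClosed_isBounded
  · exact isClosed_le cont_sqnorm continuous_const
  · rw [Metric.isBounded_iff_subset_closedBall 0]
    refine ⟨Real.sqrt r, fun x hx => ?_⟩
    simp only [Metric.mem_closedBall, dist_zero_right]
    rw [pi_norm_le_iff_of_nonneg (Real.sqrt_nonneg r)]
    intro i
    rw [Real.norm_eq_abs, ← Real.sqrt_sq_eq_abs]
    exact Real.sqrt_le_sqrt (le_trans (coord_sq_le x i) hx)

lemma bound_on_ball (p : MvPolynomial (Fin n) ℝ) (r : ℝ) :
    ∃ M : ℝ, 0 ≤ M ∧ ∀ x : Fin n → ℝ, sqnorm n x ≤ r → |eval x p| ≤ M := by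
  obtain ⟨M, hM⟩ := (isCompact_ball (n := n) r).exists_bound_of_continuousOn
    (cont_eval p).continuousOn
  by_cases hne : ∃ x : Fin n → ℝ, sqnorm n x ≤ r
  · obtain ⟨x₀, hx₀⟩ := hne
    refine ⟨M, le_trans (abs_nonneg _) (hM x₀ hx₀), fun x hx => hM x hx⟩
  · exact ⟨0, le_refl _, fun x hx => absurd ⟨x, hx⟩ hne⟩

lemma abs_mul_le_sqnorm (x : Fin n → ℝ) (i j : Fin n) :
    |x i * x j| ≤ sqnorm n x := by
  rw [← Real.sqrt_sq_eq_abs]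
  have h : (x i * x j)^2 ≤ sqnorm n x * sqnorm n x := by
    rw [mul_pow]
    exact mul_le_mul (coord_sq_le x i) (coord_sq_le x j) (sq_nonneg _) (sqnorm_nonneg' x)
  calc Real.sqrt ((x i * x j)^2) ≤ Real.sqrt (sqnorm n x * sqnorm n x) := Real.sqrt_le_sqrt h
    _ = sqnorm n x := Real.sqrt_mul_self (sqnorm_nonneg' x)

lemma quad_bound (p : MvPolynomial (Fin n) ℝ) (r : ℝ) (h0 : eval 0 p = 0)
    (h1 : ∀ i, eval 0 (pderiv i p) = 0) :
    ∃ β : ℝ, 0 ≤ β ∧ ∀ x : Fin n → ℝ, sqnorm n x ≤ r → |eval x p| ≤ β * sqnorm n x := by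
  obtain ⟨q, hq⟩ := decomp1 p
  have hq0 : ∀ i, eval 0 (q i) = 0 := fun i => by
    rw [← eval0_pderiv_of_decomp _ _ _ hq i]; exact h1 i
  choose qq hqq using fun i => decomp1 (q i)
  choose M hM0 hM using fun i j => bound_on_ball (qq i j) r
  refine ⟨∑ i, ∑ j, M i j, Finset.sum_nonneg fun i _ => Finset.sum_nonneg fun j _ => hM0 i j,
    fun x hx => ?_⟩
  have hev : eval x p = ∑ i, ∑ j, (x i * x j) * eval x (qq i j) := by
    conv_lhs => rw [hq]
    rw [map_add, eval_C, h0, map_sum, zero_add]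
    refine Finset.sum_congr rfl fun i _ => ?_
    rw [eval_mul, eval_X]
    conv_lhs => rw [hqq i]
    rw [map_add, eval_C, hq0 i, map_sum, zero_add, Finset.mul_sum]
    refine Finset.sum_congr rfl fun j _ => ?_
    rw [eval_mul, eval_X]
    ring
  rw [hev, Finset.sum_mul]
  calc |∑ i, ∑ j, (x i * x j) * eval x (qq i j)|
      ≤ ∑ i, |∑ j, (x i * x j) * eval x (qq i j)| := Finset.abs_sum_le_sum_abs _ _
    _ ≤ ∑ i, ∑ j, |(x i * x j) * eval x (qq i j)| :=
        Finset.sum_le_sum fun i _ => Finset.abs_sum_le_sum_abs _ _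
    _ ≤ ∑ i, ∑ j, M i j * sqnorm n x := by
        refine Finset.sum_le_sum fun i _ => Finset.sum_le_sum fun j _ => ?_
        rw [abs_mul]
        calc |x i * x j| * |eval x (qq i j)| ≤ sqnorm n x * M i j :=
              mul_le_mul (abs_mul_le_sqnorm x i j) (hM i j x hx) (abs_nonneg _)
                (sqnorm_nonneg' x)
          _ = M i j * sqnorm n x := mul_comm _ _
    _ = ∑ i, (∑ j, M i j) * sqnorm n x := by
        refine Finset.sum_congr rfl fun i _ => ?_
        rw [Finset.sum_mul]

lemma lin_sq_bound (p : MvPolynomial (Fin n) ℝ) (r : ℝ) (h0 : eval 0 p = 0) :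
    ∃ M : ℝ, 0 ≤ M ∧ ∀ x : Fin n → ℝ, sqnorm n x ≤ r → (eval x p)^2 ≤ M * sqnorm n x := by
  obtain ⟨q, hq⟩ := decomp1 p
  choose M hM0 hM using fun i => bound_on_ball (q i) r
  refine ⟨∑ i, (M i)^2, Finset.sum_nonneg fun i _ => sq_nonneg _, fun x hx => ?_⟩
  have hev : eval x p = ∑ i, x i * eval x (q i) := by
    conv_lhs => rw [hq]
    rw [map_add, eval_C, h0, map_sum, zero_add]
    exact Finset.sum_congr rfl fun i _ => by rw [eval_mul, eval_X]
  rw [hev]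
  calc (∑ i, x i * eval x (q i))^2
      ≤ (∑ i, (x i)^2) * (∑ i, (eval x (q i))^2) :=
        Finset.sum_mul_sq_le_sq_mul_sq _ _ _
    _ ≤ sqnorm n x * (∑ i, (M i)^2) := by
        refine mul_le_mul (le_refl _) (Finset.sum_le_sum fun i _ => ?_)
          (Finset.sum_nonneg fun i _ => sq_nonneg _) (sqnorm_nonneg' x)
        rw [← sq_abs]
        exact pow_le_pow_left₀ (abs_nonneg _) (hM i x hx) 2
    _ = (∑ i, (M i)^2) * sqnorm n x := mul_comm _ _

lemma pderiv_comm' (i j : Fin n) (p : MvPolynomial (Fin n) ℝ) :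
    pderiv i (pderiv j p) = pderiv j (pderiv i p) := by
  induction p using MvPolynomial.induction_on with
  | C a => simp [pderiv_C]
  | add p q hp hq => simp [map_add, hp, hq]
  | mul_X p k hp =>
    classical
    simp only [pderiv_mul, map_add, pderiv_mul, hp, pderiv_X, Pi.single_apply,
      apply_ite (pderiv i), apply_ite (pderiv j), pderiv_one, map_zero]
    split_ifs <;> ring

lemma gronwall_le (φ D : ℝ → ℝ) (K a b : ℝ) (hab : a ≤ b)
    (hd : ∀ t ∈ Icc a b, HasDerivAt φ (D t) t)
    (hD : ∀ t ∈ Icc a b, D t ≤ K * φ t) :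
    φ b ≤ φ a * Real.exp (K * (b - a)) := by
  set h := fun t => φ t * Real.exp (-K * t) with hh
  have hder : ∀ t ∈ Icc a b, HasDerivAt h ((D t - K * φ t) * Real.exp (-K * t)) t := by
    intro t ht
    have hexp : HasDerivAt (fun t : ℝ => Real.exp (-K * t)) (Real.exp (-K * t) * (-K * 1)) t :=
      ((hasDerivAt_id t).const_mul (-K)).exp
    have := (hd t ht).mul hexp
    refine HasDerivAt.congr_deriv this ?_; symm
    ring
  have hanti : AntitoneOn h (Icc a b) := by
    apply antitoneOn_of_deriv_nonpos (convex_Icc a b)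
    · exact fun t ht => (hder t ht).continuousAt.continuousWithinAt
    · intro t ht
      rw [interior_Icc] at ht
      exact ((hder t (Ioo_subset_Icc_self ht)).differentiableAt).differentiableWithinAt
    · intro t ht
      rw [interior_Icc] at ht
      rw [(hder t (Ioo_subset_Icc_self ht)).deriv]
      apply mul_nonpos_of_nonpos_of_nonneg
      · have := hD t (Ioo_subset_Icc_self ht); linarith
      · exact (Real.exp_pos _).le
  have hba := hanti (left_mem_Icc.2 hab) (right_mem_Icc.2 hab) hab
  have hpos : (0:ℝ) < Real.exp (-K * b) := Real.exp_pos _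
  have : φ b = h b * Real.exp (K * b) := by
    simp only [hh]
    rw [mul_assoc, ← Real.exp_add]
    simp
  rw [this]
  calc h b * Real.exp (K * b) ≤ h a * Real.exp (K * b) :=
        mul_le_mul_of_nonneg_right hba (Real.exp_pos _).le
    _ = φ a * Real.exp (K * (b - a)) := by
        simp only [hh]
        rw [mul_assoc, ← Real.exp_add]
        congr 2
        ring

lemma deriv_le_const (φ D : ℝ → ℝ) (K a b : ℝ) (hab : a ≤ b)
    (hd : ∀ t ∈ Icc a b, HasDerivAt φ (D t) t)
    (hD : ∀ t ∈ Icc a b, D t ≤ -K) :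
    φ b ≤ φ a - K * (b - a) := by
  set h := fun t => φ t + K * t with hh
  have hder : ∀ t ∈ Icc a b, HasDerivAt h (D t + K) t := by
    intro t ht
    have := (hd t ht).add ((hasDerivAt_id t).const_mul K)
    simp only [mul_one] at this
    exact this
  have hanti : AntitoneOn h (Icc a b) := by
    apply antitoneOn_of_deriv_nonpos (convex_Icc a b)
    · exact fun t ht => (hder t ht).continuousAt.continuousWithinAt
    · intro t ht
      rw [interior_Icc] at ht
      exact ((hder t (Ioo_subset_Icc_self ht)).differentiableAt).differentiableWithinAt
    · intro t ht
      rw [interior_Icc] at ht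
      rw [(hder t (Ioo_subset_Icc_self ht)).deriv]
      have := hD t (Ioo_subset_Icc_self ht); linarith
  have hba := hanti (left_mem_Icc.2 hab) (right_mem_Icc.2 hab) hab
  simp only [hh] at hba
  linarith

lemma no_escape (φ : ℝ → ℝ) (d τ t₁ : ℝ) (hτ : τ < t₁) (hder : HasDerivAt φ d τ)
    (hneg : d < 0) (hup : ∀ t, τ < t → t ≤ t₁ → φ τ < φ t) : False := by
  have hs := hasDerivAt_iff_tendsto_slope.1 hder
  have hev : ∀ᶠ t in nhdsWithin τ (Ioi τ), slope φ τ t < 0 := by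
    have h1 : ∀ᶠ t in nhdsWithin τ {τ}ᶜ, slope φ τ t < 0 :=
      hs.eventually (Iio_mem_nhds hneg)
    exact h1.filter_mono (nhdsWithin_mono τ fun y hy => ne_of_gt hy)
  have hev2 : ∀ᶠ t in nhdsWithin τ (Ioi τ), t ≤ t₁ := by
    filter_upwards [Ioc_mem_nhdsGT hτ] with t ht
    exact ht.2
  have hev3 : ∀ᶠ t in nhdsWithin τ (Ioi τ), t ∈ Ioi τ := self_mem_nhdsWithin
  obtain ⟨t, ⟨h1, h2⟩, h3⟩ := ((hev.and hev2).and hev3).exists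
  have hlt : τ < t := h3
  have : 0 < slope φ τ t := by
    rw [slope_def_field]
    apply div_pos _ (by linarith)
    have := hup t hlt h2
    linarith
  linarith [h1]

lemma hasDerivAt_ray (p : MvPolynomial (Fin n) ℝ) (y w : Fin n → ℝ) (s : ℝ) :
    HasDerivAt (fun s : ℝ => eval (y + s • w) p)
      (∑ i, eval (y + s • w) (pderiv i p) * w i) s := by
  have hcurve : HasDerivAt (fun s : ℝ => y + s • w) w s := by
    have := (hasDerivAt_const s y).add ((hasDerivAt_id s).smul_const w)
    simp only [zero_add, one_smul] at this
    exact this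
  exact hasDerivAt_eval p _ w s hcurve

lemma hasDerivAt_ray0 (p : MvPolynomial (Fin n) ℝ) (w : Fin n → ℝ) (s : ℝ) :
    HasDerivAt (fun s : ℝ => eval (s • w) p)
      (∑ i, eval (s • w) (pderiv i p) * w i) s := by
  have := hasDerivAt_ray p 0 w s
  simpa using this

lemma glob_min_dir (p : MvPolynomial (Fin n) ℝ) (y w : Fin n → ℝ)
    (hmin : ∀ z, eval y p ≤ eval z p) :
    ∑ i, eval y (pderiv i p) * w i = 0 := by
  have hloc : IsLocalMin (fun s : ℝ => eval (y + s • w) p) 0 := by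
    refine Filter.Eventually.of_forall fun s => ?_
    simpa using hmin (y + s • w)
  have := hloc.hasDerivAt_eq_zero (hasDerivAt_ray p y w 0)
  simpa using this

lemma nonneg_ball_dir (p : MvPolynomial (Fin n) ℝ) (w : Fin n → ℝ) (r : ℝ) (hr : 0 < r)
    (h0 : eval 0 p = 0) (hnn : ∀ x, sqnorm n x ≤ r → 0 ≤ eval x p) :
    ∑ i, eval 0 (pderiv i p) * w i = 0 := by
  have hloc : IsLocalMin (fun s : ℝ => eval (s • w) p) 0 := by
    have hev : ∀ᶠ s : ℝ in nhds 0, s^2 * sqnorm n w < r := by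
      have hc : Continuous fun s : ℝ => s^2 * sqnorm n w := by continuity
      have ht : Filter.Tendsto (fun s : ℝ => s^2 * sqnorm n w) (nhds 0) (nhds 0) := by
        have := hc.tendsto 0
        simpa using this
      exact ht.eventually_lt_const hr
    refine hev.mono fun s hs => ?_
    have h1 : sqnorm n (s • w) ≤ r := by rw [sqnorm_smul]; exact hs.le
    have h2 := hnn (s • w) h1
    show eval ((0:ℝ) • w) p ≤ eval (s • w) p
    rw [zero_smul, h0]
    exact h2
  have := hloc.hasDerivAt_eq_zero (hasDerivAt_ray0 p w 0)
  simpa using this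

lemma sum_single_eval (F : Fin n → ℝ) (j : Fin n) :
    ∑ i, F i * (Pi.single j (1:ℝ) : Fin n → ℝ) i = F j := by
  classical
  rw [Finset.sum_eq_single j (fun i _ hij => by simp [Pi.single_apply, hij]) (by simp)]
  simp

set_option maxHeartbeats 2000000 in
lemma f0_zero (v : MvPolynomial (Fin n) ℝ) (P : Fin n → MvPolynomial (Fin n) ℝ)
    (ε r : ℝ) (hε : 0 < ε) (hr : 0 < r)
    (hg_ge : ∀ x, sqnorm n x ≤ r →
      ε * sqnorm n x ≤ eval x (-(∑ i, pderiv i v * P i)))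
    (hvmin : ∀ z, eval 0 v ≤ eval z v) :
    ∀ i, eval 0 (P i) = 0 := by
  classical
  set g : MvPolynomial (Fin n) ℝ := -(∑ i, pderiv i v * P i) with hg
  have hgeval : ∀ x : Fin n → ℝ,
      eval x g = -(∑ i, eval x (pderiv i v) * eval x (P i)) := by
    intro x; rw [hg, map_neg, map_sum]; simp [eval_mul]
  have R1 : ∀ i, eval 0 (pderiv i v) = 0 := by
    intro i
    have := glob_min_dir v 0 (Pi.single i 1) hvmin
    rwa [sum_single_eval] at this
  set f₀ : Fin n → ℝ := fun i => eval 0 (P i) with hf₀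
  have hg0 : eval 0 g = 0 := by
    rw [hgeval]
    simp only [neg_eq_zero]
    exact Finset.sum_eq_zero fun i _ => by rw [R1 i, zero_mul]
  have hgnn : ∀ x, sqnorm n x ≤ r → 0 ≤ eval x g := fun x hx =>
    le_trans (mul_nonneg hε.le (sqnorm_nonneg' x)) (hg_ge x hx)
  have hGrad : ∀ j, eval 0 (pderiv j g) = 0 := by
    intro j
    have := nonneg_ball_dir g (Pi.single j 1) r hr hg0 hgnn
    rwa [sum_single_eval] at this
  have hstar : ∀ j, ∑ i, eval 0 (pderiv j (pderiv i v)) * f₀ i = 0 := by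
    intro j
    have hpd : pderiv j g = -(∑ i, (pderiv j (pderiv i v) * P i
        + pderiv i v * pderiv j (P i))) := by
      rw [hg, map_neg, map_sum]
      congr 1
      exact Finset.sum_congr rfl fun i _ => pderiv_mul
    have h0 := hGrad j
    rw [hpd, map_neg, map_sum] at h0
    simp only [map_add, eval_mul] at h0
    have : ∀ i : Fin n, eval 0 (pderiv j (pderiv i v)) * eval 0 (P i)
        + eval 0 (pderiv i v) * eval 0 (pderiv j (P i))
        = eval 0 (pderiv j (pderiv i v)) * f₀ i := by
      intro i; rw [R1 i, zero_mul, add_zero, hf₀]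
    rw [Finset.sum_congr rfl fun i _ => this i] at h0
    linarith [h0]
  intro i₀
  by_contra hne
  have hF : 0 < sqnorm n f₀ := by
    have h1 : (f₀ i₀)^2 ≤ sqnorm n f₀ := coord_sq_le f₀ i₀
    have h2 : 0 < (f₀ i₀)^2 :=
      lt_of_le_of_ne (sq_nonneg _) (Ne.symm (pow_ne_zero 2 hne))
    linarith
  set F := sqnorm n f₀ with hFdef
  -- second-order expansion of each pderiv i v along the ray s • f₀
  have key : ∀ i : Fin n, ∃ R : ℝ → ℝ, Continuous R ∧
      ∀ s : ℝ, eval (s • f₀) (pderiv i v) = s^2 * R s := by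
    intro i
    obtain ⟨R, hRc, hR⟩ := expand2 (pderiv i v) f₀
    refine ⟨R, hRc, fun s => ?_⟩
    have hlin : (∑ j, f₀ j * eval 0 (pderiv j (pderiv i v))) = 0 := by
      have : ∀ j : Fin n, f₀ j * eval 0 (pderiv j (pderiv i v))
          = eval 0 (pderiv i (pderiv j v)) * f₀ j := by
        intro j; rw [pderiv_comm' j i v]; ring
      rw [Finset.sum_congr rfl fun j _ => this j]
      exact hstar i
    rw [hR s, R1 i, hlin]
    ring
  choose Rv hRvc hRv using key
  choose E hEc hE using fun i => expand1 (P i) f₀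
  set G : ℝ → ℝ := fun s => ∑ i, Rv i s * f₀ i with hGdef
  set H : ℝ → ℝ := fun s => ∑ i, Rv i s * E i s with hHdef
  have hGc : Continuous G := continuous_finset_sum _ fun i _ => (hRvc i).mul continuous_const
  have hHc : Continuous H := continuous_finset_sum _ fun i _ => (hRvc i).mul (hEc i)
  -- derivative of a(s) = v(s f₀)
  have hDa : ∀ s : ℝ, HasDerivAt (fun s : ℝ => eval (s • f₀) v) (s^2 * G s) s := by
    intro s
    have h := hasDerivAt_ray0 v f₀ s
    have : (∑ i, eval (s • f₀) (pderiv i v) * f₀ i) = s^2 * G s := by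
      rw [hGdef, Finset.mul_sum]
      exact Finset.sum_congr rfl fun i _ => by rw [hRv i s]; ring
    rwa [this] at h
  -- expression of b(s) = g(s f₀)
  have hb : ∀ s : ℝ, eval (s • f₀) g = -(s^2 * G s) - s^3 * H s := by
    intro s
    rw [hgeval]
    have : ∀ i : Fin n, eval (s • f₀) (pderiv i v) * eval (s • f₀) (P i)
        = s^2 * (Rv i s * f₀ i) + s^3 * (Rv i s * E i s) := by
      intro i
      rw [hRv i s, (hE i).2 s]
      ring
    rw [Finset.sum_congr rfl fun i _ => this i, Finset.sum_add_distrib,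
      ← Finset.mul_sum, ← Finset.mul_sum]
    rw [hGdef, hHdef]
    ring
  -- choose η
  have hev : ∀ᶠ s : ℝ in nhds 0, |s * H s| < ε * F / 2 ∧ s^2 * F < r := by
    have h1 : Filter.Tendsto (fun s : ℝ => |s * H s|) (nhds 0) (nhds 0) := by
      have hc : Continuous fun s : ℝ => |s * H s| := (continuous_id.mul hHc).abs
      have := hc.tendsto 0
      simpa using this
    have h2 : Filter.Tendsto (fun s : ℝ => s^2 * F) (nhds 0) (nhds 0) := by
      have hc : Continuous fun s : ℝ => s^2 * F := by continuity
      have := hc.tendsto 0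
      simpa using this
    exact (h1.eventually_lt_const (by positivity)).and (h2.eventually_lt_const hr)
  obtain ⟨η, hη, hηball⟩ := Metric.eventually_nhds_iff.1 hev
  set η' := η / 2 with hη'def
  have hη'pos : 0 < η' := by positivity
  have hprop : ∀ s : ℝ, |s| ≤ η' → |s * H s| < ε * F / 2 ∧ s^2 * F < r := by
    intro s hs
    apply hηball
    rw [Real.dist_eq, sub_zero]
    calc |s| ≤ η' := hs
      _ < η := by rw [hη'def]; linarith
  -- on (0, η'], derivative is negative
  have hDneg : ∀ s : ℝ, 0 < s → s ≤ η' → s^2 * G s < 0 := by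
    intro s hs hsle
    obtain ⟨hH1, hH2⟩ := hprop s (by rw [abs_of_pos hs]; exact hsle)
    have hlow := hg_ge (s • f₀) (by rw [sqnorm_smul]; exact hH2.le)
    rw [sqnorm_smul, hb s] at hlow
    -- ε * (s^2 * F) ≤ -(s^2 G s) - s^3 H s
    have hs2 : 0 < s^2 := by positivity
    have habs : -(s^3 * H s) ≤ s^2 * |s * H s| := by
      have : -(s^3 * H s) = s^2 * (-(s * H s)) := by ring
      rw [this]
      exact mul_le_mul_of_nonneg_left (neg_le_abs _) hs2.le
    have : s^2 * G s ≤ -(ε * (s^2 * F)) + s^2 * |s * H s| := by linarith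
    have h2 : s^2 * |s * H s| < s^2 * (ε * F / 2) :=
      mul_lt_mul_of_pos_left hH1 hs2
    have h3 : s^2 * (ε * F / 2) * 2 = ε * (s^2 * F) := by ring
    have hApos : 0 < s^2 * (ε * F / 2) := by positivity
    linarith
  -- MVT on [0, η'] gives a contradiction with the global minimum
  obtain ⟨ξ, hξmem, hξ⟩ := exists_hasDerivAt_eq_slope (fun s : ℝ => eval (s • f₀) v)
    (fun s => s^2 * G s) hη'pos
    (fun s _ => (hDa s).continuousAt.continuousWithinAt)
    (fun s _ => hDa s)
  have hξneg : ξ^2 * G ξ < 0 := hDneg ξ hξmem.1 hξmem.2.le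
  rw [hξ] at hξneg
  have hmin := hvmin (η' • f₀)
  have h00 : eval ((0:ℝ) • f₀) v = eval 0 v := by rw [zero_smul]
  have hslope : 0 ≤ (eval (η' • f₀) v - eval ((0:ℝ) • f₀) v) / (η' - 0) := by
    apply div_nonneg _ (by linarith)
    rw [h00]
    linarith [hmin]
  linarith

lemma pderiv_qpoly (i : Fin n) : pderiv i (qpoly n) = 2 * X i := by
  classical
  rw [qpoly, map_sum]
  rw [Finset.sum_eq_single i (fun j _ hji => by
    rw [pderiv_pow, pderiv_X_of_ne hji, mul_zero]) (by simp)]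
  rw [pderiv_pow, pderiv_X_self]
  ring

lemma eval_g_eq (v : MvPolynomial (Fin n) ℝ) (P : Fin n → MvPolynomial (Fin n) ℝ)
    (x : Fin n → ℝ) :
    eval x (-(∑ i, pderiv i v * P i)) = -(∑ i, eval x (pderiv i v) * eval x (P i)) := by
  rw [map_neg, map_sum]; simp [eval_mul]

end SOSAux

open SOSAux

set_option maxHeartbeats 4000000

/-- consider `ẋ = f(x)` with a polynomial vector field
`f_i(x) = eval x (P i)`.  Suppose there are a polynomial `v`, a constant `ε > 0`,
a radius `r > 0`, and sum-of-squares polynomials `s₁, s₂, t₁, t₂` with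
`v − s₁·(r − xᵀx) − s₂ − ε·xᵀx = 0` and
`−∇vᵀf − t₁·(r − xᵀx) − t₂ − ε·xᵀx = 0` identically.  Then there are constants
`μ, δ > 0` such that every solution with initial condition in `Y(v,r)`, the
largest sublevel set of `v` contained in `{x : xᵀx ≤ r}`, satisfies
`‖x(t)‖₂ ≤ μ‖x₀‖₂ e^{−δt}` for all `t ≥ 0`. -/
theorem sos_implies_exponential_stability (n : ℕ)
    (P : Fin n → MvPolynomial (Fin n) ℝ)
    (v : MvPolynomial (Fin n) ℝ) (ε r : ℝ) (hε : 0 < ε) (hr : 0 < r)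
    (s₁ s₂ t₁ t₂ : MvPolynomial (Fin n) ℝ)
    (hs₁ : IsSOS s₁) (hs₂ : IsSOS s₂) (ht₁ : IsSOS t₁) (ht₂ : IsSOS t₂)
    (h1 : v - s₁ * (MvPolynomial.C r - qpoly n) - s₂ -
      MvPolynomial.C ε * qpoly n = 0)
    (h2 : -(∑ i, MvPolynomial.pderiv i v * P i) -
      t₁ * (MvPolynomial.C r - qpoly n) - t₂ - MvPolynomial.C ε * qpoly n = 0) :
    ∃ μ δ : ℝ, 0 < μ ∧ 0 < δ ∧
      ∀ x : ℝ → (Fin n → ℝ),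
        (∀ t ≥ (0:ℝ), HasDerivAt x (fun i => MvPolynomial.eval (x t) (P i)) t) →
        x 0 ∈ YSet n v r →
        ∀ t ≥ (0:ℝ), enorm2 n (x t) ≤ μ * enorm2 n (x 0) * Real.exp (-δ * t) := by
  classical
  open MvPolynomial in
  by_cases hY : (YSet n v r).Nonempty
  swap
  · exact ⟨1, 1, one_pos, one_pos, fun x hx hx0 t ht => absurd ⟨x 0, hx0⟩ hY⟩
  obtain ⟨z, c₀, hc₀ball, hc₀z⟩ := hY
  set g : MvPolynomial (Fin n) ℝ := -(∑ i, pderiv i v * P i) with hgdef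
  have hgid : g = t₁ * (C r - qpoly n) + t₂ + C ε * qpoly n := by
    linear_combination h2
  have hg_ge : ∀ x : Fin n → ℝ, sqnorm n x ≤ r → ε * sqnorm n x ≤ eval x g := by
    intro x hx
    rw [hgid]
    simp only [map_add, eval_mul, map_sub, eval_C, eval_qpoly]
    have ha : 0 ≤ eval x t₁ := sos_nonneg ht₁ x
    have hb : 0 ≤ eval x t₂ := sos_nonneg ht₂ x
    have hc : 0 ≤ eval x t₁ * (r - sqnorm n x) := mul_nonneg ha (by linarith)
    linarith
  -- the origin is the global minimum of v
  have hSclosed : IsClosed {y : Fin n → ℝ | eval y v ≤ c₀} :=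
    isClosed_le (cont_eval v) continuous_const
  have hScomp : IsCompact {y : Fin n → ℝ | eval y v ≤ c₀} :=
    (isCompact_ball r).of_isClosed_subset hSclosed (fun y hy => hc₀ball y hy)
  obtain ⟨y₀, hy₀S, hy₀min⟩ := hScomp.exists_isMinOn ⟨z, hc₀z⟩ (cont_eval v).continuousOn
  have hy₀glob : ∀ w, eval y₀ v ≤ eval w v := by
    intro w
    by_cases hw : eval w v ≤ c₀
    · exact isMinOn_iff.1 hy₀min w hw
    · push_neg at hw
      exact le_trans hy₀S hw.le
  have hgy₀ : eval y₀ g = 0 := by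
    have hdir := glob_min_dir v y₀ (fun i => eval y₀ (P i)) hy₀glob
    rw [hgdef, eval_g_eq, hdir, neg_zero]
  have hy₀0 : y₀ = 0 := by
    apply sqnorm_eq_zero
    have hq1 := hg_ge y₀ (hc₀ball y₀ hy₀S)
    rw [hgy₀] at hq1
    have := sqnorm_nonneg' y₀
    nlinarith
  have hvmin : ∀ w, eval 0 v ≤ eval w v := by
    intro w; rw [← hy₀0]; exact hy₀glob w
  have hf0 : ∀ i, eval 0 (P i) = 0 :=
    f0_zero v P ε r hε hr (by rw [← hgdef]; exact hg_ge) hvmin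
  have R1 : ∀ i, eval 0 (pderiv i v) = 0 := by
    intro i
    have := glob_min_dir v 0 (Pi.single i 1) hvmin
    rwa [sum_single_eval] at this
  -- quadratic upper bound for u = v - m on the ball
  set m := eval 0 v with hmdef
  have hu0 : eval (0 : Fin n → ℝ) (v - C m) = 0 := by
    rw [map_sub, eval_C, hmdef, sub_self]
  have hup : ∀ i, eval (0 : Fin n → ℝ) (pderiv i (v - C m)) = 0 := by
    intro i
    rw [map_sub, pderiv_C, sub_zero]
    exact R1 i
  obtain ⟨β₀, hβ₀, hβ⟩ := quad_bound (v - C m) r hu0 hup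
  set β := β₀ + 1 with hβdef
  have hβpos : 0 < β := by linarith
  have hubound : ∀ x : Fin n → ℝ, sqnorm n x ≤ r → eval x v - m ≤ β * sqnorm n x := by
    intro x hx
    have h1 := hβ x hx
    have h2 : eval x (v - C m) = eval x v - m := by rw [map_sub, eval_C]
    have h3 := le_abs_self (eval x (v - C m))
    have hq := sqnorm_nonneg' x
    rw [h2] at h1 h3
    have : |eval x v - m| ≤ β * sqnorm n x := by
      calc |eval x v - m| ≤ β₀ * sqnorm n x := h1
        _ ≤ β * sqnorm n x := by
            apply mul_le_mul_of_nonneg_right _ hq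
            rw [hβdef]; linarith
    linarith [abs_le.1 this |>.2]
  -- bound on the vector field
  choose Mi hMi0 hMi using fun i => lin_sq_bound (P i) r (hf0 i)
  set Ms := ∑ i, Mi i with hMs
  have hMs0 : 0 ≤ Ms := Finset.sum_nonneg fun i _ => hMi0 i
  set L := 2 * Real.sqrt Ms with hLdef
  have hL0 : 0 ≤ L := by positivity
  have hfield : ∀ x : Fin n → ℝ, sqnorm n x ≤ r →
      (∑ i, x i * eval x (P i)) ≤ Real.sqrt Ms * sqnorm n x := by
    intro x hx
    have h1 : (∑ i, x i * eval x (P i))^2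
        ≤ (∑ i, (x i)^2) * (∑ i, (eval x (P i))^2) :=
      Finset.sum_mul_sq_le_sq_mul_sq _ _ _
    have h2 : (∑ i, (eval x (P i))^2) ≤ Ms * sqnorm n x := by
      rw [hMs, Finset.sum_mul]
      exact Finset.sum_le_sum fun i _ => hMi i x hx
    have hq := sqnorm_nonneg' x
    have h3 : (∑ i, x i * eval x (P i))^2 ≤ Ms * (sqnorm n x * sqnorm n x) := by
      calc (∑ i, x i * eval x (P i))^2 ≤ sqnorm n x * (Ms * sqnorm n x) := by
            refine le_trans h1 ?_
            exact mul_le_mul_of_nonneg_left h2 hq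
        _ = Ms * (sqnorm n x * sqnorm n x) := by ring
    calc (∑ i, x i * eval x (P i)) ≤ |∑ i, x i * eval x (P i)| := le_abs_self _
      _ = Real.sqrt ((∑ i, x i * eval x (P i))^2) := (Real.sqrt_sq_eq_abs _).symm
      _ ≤ Real.sqrt (Ms * (sqnorm n x * sqnorm n x)) := Real.sqrt_le_sqrt h3
      _ = Real.sqrt Ms * sqnorm n x := by
          rw [Real.sqrt_mul hMs0, Real.sqrt_mul_self hq]
  -- constants
  set δ₀ := ε / β with hδ₀def
  have hδ₀pos : 0 < δ₀ := div_pos hε hβpos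
  set A := Real.exp (L + δ₀) * max 1 (β / ε) with hAdef
  have hA1 : (1:ℝ) ≤ max 1 (β / ε) := le_max_left _ _
  have hApos : 0 < A := mul_pos (Real.exp_pos _) (lt_of_lt_of_le one_pos hA1)
  refine ⟨Real.sqrt A, δ₀ / 2, Real.sqrt_pos.2 hApos, by positivity, ?_⟩
  intro x hx hx0
  obtain ⟨c, hcball, hc0⟩ := hx0
  set φ : ℝ → ℝ := fun t => eval (x t) v with hφdef
  set ψ : ℝ → ℝ := fun t => sqnorm n (x t) with hψdef
  set Dφ : ℝ → ℝ := fun t => -(eval (x t) g) with hDφdef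
  set Dψ : ℝ → ℝ := fun t => 2 * ∑ i, x t i * eval (x t) (P i) with hDψdef
  have hφd : ∀ s : ℝ, 0 ≤ s → HasDerivAt φ (Dφ s) s := by
    intro s hs
    have h := hasDerivAt_eval v x (fun i => eval (x s) (P i)) s (hx s hs)
    have heq : (∑ i, eval (x s) (pderiv i v) * eval (x s) (P i)) = Dφ s := by
      rw [hDφdef]
      simp only
      rw [hgdef, eval_g_eq, neg_neg]
    rwa [heq] at h
  have hψd : ∀ s : ℝ, 0 ≤ s → HasDerivAt ψ (Dψ s) s := by
    intro s hs
    have hq : ψ = fun t => eval (x t) (qpoly n) := by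
      funext u; rw [hψdef]; simp only; rw [eval_qpoly]
    have h := hasDerivAt_eval (qpoly n) x (fun i => eval (x s) (P i)) s (hx s hs)
    rw [hq]
    have heq : (∑ i, eval (x s) (pderiv i (qpoly n)) * eval (x s) (P i)) = Dψ s := by
      rw [hDψdef]; simp only
      rw [Finset.mul_sum]
      refine Finset.sum_congr rfl fun i _ => ?_
      rw [pderiv_qpoly, eval_mul, eval_X]
      norm_num
      ring
    rwa [heq] at h
  have hψnn : ∀ s : ℝ, 0 ≤ ψ s := fun s => sqnorm_nonneg' (x s)
  have hψbound : ∀ s : ℝ, ψ s ≤ r → Dψ s ≤ L * ψ s := by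
    intro s hs
    have hf := hfield (x s) hs
    rw [hDψdef, hLdef]
    simp only
    have h2 : 2 * (∑ i, x s i * eval (x s) (P i)) ≤ 2 * (Real.sqrt Ms * sqnorm n (x s)) := by
      linarith
    calc 2 * ∑ i, x s i * eval (x s) (P i)
        ≤ 2 * (Real.sqrt Ms * sqnorm n (x s)) := h2
      _ = 2 * Real.sqrt Ms * ψ s := by rw [hψdef]; ring
  -- invariance: the trajectory stays in the sublevel set
  have hinv : ∀ t : ℝ, 0 ≤ t → φ t ≤ c := by
    intro t₁ ht₁
    by_contra hgt
    push_neg at hgt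
    have ht₁pos : 0 < t₁ := by
      rcases eq_or_lt_of_le ht₁ with h | h
      · exfalso; rw [← h] at hgt; exact absurd hc0 (not_le.2 hgt)
      · exact h
    set A₁ := (Icc (0:ℝ) t₁) ∩ φ ⁻¹' (Iic c) with hA₁def
    have hφcont : ContinuousOn φ (Icc 0 t₁) :=
      fun s hs => (hφd s hs.1).continuousAt.continuousWithinAt
    have hA₁closed : IsClosed A₁ :=
      hφcont.preimage_isClosed_of_isClosed isClosed_Icc isClosed_Iic
    have hA₁comp : IsCompact A₁ :=
      isCompact_Icc.of_isClosed_subset hA₁closed inter_subset_left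
    have h0A₁ : (0:ℝ) ∈ A₁ := ⟨⟨le_refl 0, ht₁⟩, hc0⟩
    obtain ⟨τ, hτA, hτub⟩ := hA₁comp.exists_isGreatest ⟨0, h0A₁⟩
    have hτ0 : 0 ≤ τ := hτA.1.1
    have hτc : φ τ ≤ c := hτA.2
    have hτt₁ : τ < t₁ := by
      rcases eq_or_lt_of_le hτA.1.2 with h | h
      · exfalso; rw [h] at hτc; exact absurd hτc (not_le.2 hgt)
      · exact h
    have hup : ∀ s, τ < s → s ≤ t₁ → c < φ s := by
      intro s hs1 hs2
      by_contra hle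
      push_neg at hle
      have hmem : s ∈ A₁ := ⟨⟨le_trans hτ0 hs1.le, hs2⟩, hle⟩
      exact absurd (hτub hmem) (not_le.2 hs1)
    have hφτc : φ τ = c := by
      rcases eq_or_lt_of_le hτc with h | hlt
      · exact h
      · exfalso
        have hev : ∀ᶠ s in nhds τ, φ s < c :=
          Filter.Tendsto.eventually_lt_const hlt (hφd τ hτ0).continuousAt
        have hev2 : ∀ᶠ s in nhdsWithin τ (Ioi τ), φ s < c :=
          hev.filter_mono nhdsWithin_le_nhds
        have hev3 : ∀ᶠ s in nhdsWithin τ (Ioi τ), s ≤ t₁ := by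
          filter_upwards [Ioc_mem_nhdsGT hτt₁] with s hs using hs.2
        obtain ⟨s, ⟨hs1, hs2⟩, hs3⟩ := ((hev2.and hev3).and self_mem_nhdsWithin).exists
        exact absurd (hup s hs3 hs2) (not_lt.2 hs1.le)
    have hxτball : sqnorm n (x τ) ≤ r := hcball (x τ) (le_of_eq hφτc)
    rcases eq_or_lt_of_le (hψnn τ) with hq0 | hqpos
    · -- x τ = 0
      have hxτ0 : x τ = 0 := by
        apply sqnorm_eq_zero
        rw [hψdef] at hq0
        exact hq0.symm
      have hcm : c = m := by
        rw [← hφτc, hφdef]; simp only; rw [hxτ0, hmdef]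
      set A₂ := (Icc τ t₁) ∩ ψ ⁻¹' {0} with hA₂def
      have hψcont : ContinuousOn ψ (Icc τ t₁) :=
        fun s hs => (hψd s (le_trans hτ0 hs.1)).continuousAt.continuousWithinAt
      have hA₂closed : IsClosed A₂ :=
        hψcont.preimage_isClosed_of_isClosed isClosed_Icc isClosed_singleton
      have hA₂comp : IsCompact A₂ :=
        isCompact_Icc.of_isClosed_subset hA₂closed inter_subset_left
      have hτA₂ : τ ∈ A₂ := by
        refine ⟨⟨le_refl τ, hτt₁.le⟩, ?_⟩
        simp only [mem_preimage, mem_singleton_iff, hψdef]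
        rw [hxτ0]
        simp [sqnorm]
      obtain ⟨T, hTA, hTub⟩ := hA₂comp.exists_isGreatest ⟨τ, hτA₂⟩
      have hψT : ψ T = 0 := hTA.2
      rcases eq_or_lt_of_le hTA.1.2 with hTt₁ | hTlt
      · have hzt₁ : ψ t₁ = 0 := by rw [← hTt₁]; exact hψT
        have hxt₁ : x t₁ = 0 := by
          apply sqnorm_eq_zero; rw [hψdef] at hzt₁; exact hzt₁
        have hφt₁ : φ t₁ = m := by
          rw [hφdef]; simp only; rw [hxt₁, hmdef]
        rw [hcm] at hgt
        linarith
      · have hT0 : 0 ≤ T := le_trans hτ0 hTA.1.1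
        have hcont : ContinuousAt ψ T := (hψd T hT0).continuousAt
        have hev : ∀ᶠ s in nhds T, ψ s < r :=
          Filter.Tendsto.eventually_lt_const (by rw [hψT]; exact hr) hcont
        obtain ⟨dd, hdd, hball2⟩ := Metric.eventually_nhds_iff.1 hev
        set h' := min (dd/2) (t₁ - T) with hh'def
        have hh'pos : 0 < h' := lt_min (by positivity) (by linarith)
        have hsubball : ∀ s, s ∈ Icc T (T + h') → ψ s ≤ r := by
          intro s hs
          apply le_of_lt; apply hball2
          rw [Real.dist_eq]
          have habs : |s - T| ≤ h' := by
            rw [abs_of_nonneg (by linarith [hs.1])]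
            linarith [hs.2]
          calc |s - T| ≤ h' := habs
            _ ≤ dd/2 := min_le_left _ _
            _ < dd := by linarith
        have hgr := gronwall_le ψ Dψ L T (T + h') (by linarith)
          (fun s hs => hψd s (by linarith [hs.1]))
          (fun s hs => hψbound s (hsubball s hs))
        rw [hψT, zero_mul] at hgr
        have hψTh : ψ (T + h') = 0 := le_antisymm hgr (hψnn _)
        have hmem : T + h' ∈ A₂ := by
          refine ⟨⟨by linarith [hTA.1.1], ?_⟩, hψTh⟩
          have := min_le_right (dd/2) (t₁ - T)
          rw [hh'def]
          linarith
        have := hTub hmem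
        linarith
    · have hDφτ : Dφ τ < 0 := by
        have hge := hg_ge (x τ) hxτball
        rw [hDφdef]; simp only
        have h2 : 0 < ε * ψ τ := mul_pos hε hqpos
        rw [hψdef] at h2
        simp only at h2
        linarith
      exact no_escape φ (Dφ τ) τ t₁ hτt₁ (hφd τ hτ0) hDφτ
        (fun s hs1 hs2 => by rw [hφτc]; exact hup s hs1 hs2)
  -- the trajectory stays in the ball
  have hball : ∀ s : ℝ, 0 ≤ s → ψ s ≤ r := by
    intro s hs
    have := hinv s hs
    exact hcball (x s) this
  set U : ℝ → ℝ := fun t => φ t - m with hUdef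
  have hUd : ∀ s : ℝ, 0 ≤ s → HasDerivAt U (Dφ s) s := fun s hs => (hφd s hs).sub_const m
  have hUnn : ∀ s : ℝ, 0 ≤ U s := by
    intro s
    rw [hUdef]; simp only
    rw [hφdef, hmdef]; simp only
    linarith [hvmin (x s)]
  have hDφle : ∀ s : ℝ, 0 ≤ s → Dφ s ≤ -(ε * ψ s) := by
    intro s hs
    have := hg_ge (x s) (hball s hs)
    rw [hDφdef, hψdef]; simp only
    linarith
  have hUdecay : ∀ t : ℝ, 0 ≤ t → U t ≤ U 0 * Real.exp (-δ₀ * t) := by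
    intro t ht
    have hDU : ∀ s ∈ Icc (0:ℝ) t, Dφ s ≤ (-δ₀) * U s := by
      intro s hs
      have h1 := hDφle s hs.1
      have h2 := hubound (x s) (hball s hs.1)
      have h3 : U s ≤ β * ψ s := by
        rw [hUdef, hφdef, hψdef]; simp only
        exact h2
      have h4 : δ₀ * U s ≤ δ₀ * (β * ψ s) := mul_le_mul_of_nonneg_left h3 hδ₀pos.le
      have h5 : δ₀ * β = ε := by rw [hδ₀def]; field_simp
      have h6 : δ₀ * (β * ψ s) = ε * ψ s := by rw [← h5]; ring
      linarith
    have := gronwall_le U Dφ (-δ₀) 0 t ht (fun s hs => hUd s hs.1) hDU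
    calc U t ≤ U 0 * Real.exp (-δ₀ * (t - 0)) := this
      _ = U 0 * Real.exp (-δ₀ * t) := by norm_num
  have hU0 : U 0 ≤ β * ψ 0 := by
    have := hubound (x 0) (hball 0 le_rfl)
    rw [hUdef, hφdef, hψdef]; simp only
    exact this
  -- main pointwise bound
  have hmain : ∀ t : ℝ, 0 ≤ t → ψ t ≤ A * ψ 0 * Real.exp (-δ₀ * t) := by
    intro t ht
    have hψ0 := hψnn 0
    by_cases hcase : t ≤ 1
    · have hgr := gronwall_le ψ Dψ L 0 t ht (fun s hs => hψd s hs.1)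
        (fun s hs => hψbound s (hball s hs.1))
      have h1 : Real.exp (L * (t - 0)) ≤ A * Real.exp (-δ₀ * t) := by
        rw [hAdef]
        have hexp1 : Real.exp (L * (t - 0)) ≤ Real.exp ((L + δ₀) + (-δ₀ * t)) := by
          apply Real.exp_le_exp.2
          have e1 : L * (t - 0) = L * t := by ring
          rw [e1]
          have e2 : L * t ≤ L := by nlinarith
          have e3 : δ₀ * t ≤ δ₀ := by nlinarith
          linarith
        calc Real.exp (L * (t - 0)) ≤ Real.exp ((L + δ₀) + (-δ₀ * t)) := hexp1
          _ = Real.exp (L + δ₀) * Real.exp (-δ₀ * t) := Real.exp_add _ _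
          _ ≤ Real.exp (L + δ₀) * max 1 (β / ε) * Real.exp (-δ₀ * t) := by
              apply mul_le_mul_of_nonneg_right _ (Real.exp_pos _).le
              exact le_mul_of_one_le_right (Real.exp_pos _).le hA1
      calc ψ t ≤ ψ 0 * Real.exp (L * (t - 0)) := hgr
        _ ≤ ψ 0 * (A * Real.exp (-δ₀ * t)) := by
            apply mul_le_mul_of_nonneg_left _ hψ0
            rw [hAdef]; rw [hAdef] at h1; exact h1
        _ = A * ψ 0 * Real.exp (-δ₀ * t) := by ring
    · push_neg at hcase
      have ht1 : (0:ℝ) ≤ t - 1 := by linarith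
      have hstep : ∀ s, s ∈ Icc (t-1) t → ψ t * Real.exp (-L) ≤ ψ s := by
        intro s hs
        have hgr := gronwall_le ψ Dψ L s t hs.2
          (fun u hu => hψd u (by linarith [hu.1, hs.1]))
          (fun u hu => hψbound u (hball u (by linarith [hu.1, hs.1])))
        have h4 : Real.exp (L * (t - s)) ≤ Real.exp L := by
          apply Real.exp_le_exp.2
          nlinarith [hs.1, hs.2, hL0]
        have h5 : ψ t ≤ ψ s * Real.exp L :=
          le_trans hgr (mul_le_mul_of_nonneg_left h4 (hψnn s))
        have h6 : ψ t * Real.exp (-L) ≤ (ψ s * Real.exp L) * Real.exp (-L) :=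
          mul_le_mul_of_nonneg_right h5 (Real.exp_pos _).le
        have h7 : (ψ s * Real.exp L) * Real.exp (-L) = ψ s := by
          rw [mul_assoc, ← Real.exp_add]
          simp
        linarith
      set K := ε * (ψ t * Real.exp (-L)) with hKdef
      have hlin := deriv_le_const U Dφ K (t-1) t (by linarith)
        (fun s hs => hUd s (by linarith [hs.1]))
        (by
          intro s hs
          have h7 := hDφle s (by linarith [hs.1])
          have h8 := hstep s hs
          have h9 : ε * (ψ t * Real.exp (-L)) ≤ ε * ψ s :=
            mul_le_mul_of_nonneg_left h8 hε.le
          rw [hKdef]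
          linarith)
      have h9 : K ≤ U (t-1) := by
        have e1 : K * (t - (t-1)) = K := by ring_nf
        have := hUnn t
        linarith [hlin, e1]
      have h11 : U (t-1) ≤ β * ψ 0 * Real.exp (-δ₀ * (t-1)) := by
        calc U (t-1) ≤ U 0 * Real.exp (-δ₀ * (t-1)) := hUdecay (t-1) ht1
          _ ≤ β * ψ 0 * Real.exp (-δ₀ * (t-1)) :=
              mul_le_mul_of_nonneg_right hU0 (Real.exp_pos _).le
      have h12 : (ε * Real.exp (-L)) * ψ t ≤ β * ψ 0 * Real.exp (-δ₀ * (t-1)) := by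
        have e1 : (ε * Real.exp (-L)) * ψ t = K := by rw [hKdef]; ring
        rw [e1]
        exact le_trans h9 h11
      have key : β * ψ 0 * Real.exp (-δ₀ * (t-1))
          ≤ (ε * Real.exp (-L)) * (A * ψ 0 * Real.exp (-δ₀ * t)) := by
        have eexp : Real.exp (-δ₀ * (t-1)) = Real.exp δ₀ * Real.exp (-δ₀ * t) := by
          rw [← Real.exp_add]; congr 1; ring
        have eexp2 : Real.exp (-L) * Real.exp (L + δ₀) = Real.exp δ₀ := by
          rw [← Real.exp_add]; congr 1; ring
        have e3 : β ≤ ε * max 1 (β / ε) := by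
          have hA2 : β / ε ≤ max 1 (β / ε) := le_max_right _ _
          calc β = ε * (β / ε) := by field_simp
            _ ≤ ε * max 1 (β / ε) := mul_le_mul_of_nonneg_left hA2 hε.le
        have hnn2 : 0 ≤ Real.exp δ₀ * (ψ 0 * Real.exp (-δ₀ * t)) :=
          mul_nonneg (Real.exp_pos _).le (mul_nonneg hψ0 (Real.exp_pos _).le)
        calc β * ψ 0 * Real.exp (-δ₀ * (t-1))
            = β * (Real.exp δ₀ * (ψ 0 * Real.exp (-δ₀ * t))) := by rw [eexp]; ring
          _ ≤ (ε * max 1 (β / ε)) * (Real.exp δ₀ * (ψ 0 * Real.exp (-δ₀ * t))) :=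
              mul_le_mul_of_nonneg_right e3 hnn2
          _ = (ε * Real.exp (-L)) * (A * ψ 0 * Real.exp (-δ₀ * t)) := by
              rw [hAdef, ← eexp2]; ring
      have hc1 : 0 < ε * Real.exp (-L) := mul_pos hε (Real.exp_pos _)
      have h14 : (ε * Real.exp (-L)) * ψ t
          ≤ (ε * Real.exp (-L)) * (A * ψ 0 * Real.exp (-δ₀ * t)) :=
        le_trans h12 key
      exact le_of_mul_le_mul_left h14 hc1
  -- conclusion
  intro t ht
  have h := hmain t ht
  have hψ0 := hψnn 0
  show Real.sqrt (sqnorm n (x t)) ≤ Real.sqrt A * Real.sqrt (sqnorm n (x 0)) * Real.exp (-(δ₀/2) * t)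
  have hψt : ψ t = sqnorm n (x t) := by rw [hψdef]
  have hψ00 : ψ 0 = sqnorm n (x 0) := by rw [hψdef]
  rw [← hψt, ← hψ00]
  have hle : Real.sqrt (ψ t) ≤ Real.sqrt (A * ψ 0 * Real.exp (-δ₀ * t)) := Real.sqrt_le_sqrt h
  have e1 : Real.sqrt (A * ψ 0 * Real.exp (-δ₀ * t))
      = Real.sqrt A * Real.sqrt (ψ 0) * Real.sqrt (Real.exp (-δ₀ * t)) := by
    rw [Real.sqrt_mul (mul_nonneg hApos.le hψ0), Real.sqrt_mul hApos.le]
  have e2 : Real.sqrt (Real.exp (-δ₀ * t)) = Real.exp (-(δ₀/2) * t) := by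
    rw [← Real.exp_half]
    congr 1
    ring
  rw [e1, e2] at hle
  exact hle
end
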